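/- Universal Kreĭn resolvent formula: if λ ∈ ρ(Ã) ∩ ρ(A_β) and à corresponds to T^λ : V_λ → W_λ̄, then T^λ is invertible and (à − λ)^{-1} = (A_β − λ)^{-1} + i_{V_λ→H} (T^λ)^{-1} pr_{W_λ̄}, where pr_{W_λ̄} is the orthogonal projection of H onto W_λ̄ and i_{V_λ→H} the inclusion. -/
import Mathlib


open scoped InnerProductSpace

/-- **universal Kreĭn resolvent formula.** If `λ ∈ ρ(Ã) ∩ ρ(A_β)` and `Ã`
corresponds to `T^λ : V_λ → W_λ̄`, then `T^λ` is invertible and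
`(Ã − λ)⁻¹ = (A_β − λ)⁻¹ + i_{V_λ→H} (T^λ)⁻¹ pr_{W_λ̄}`, where `pr_{W_λ̄} = PW` is the
orthogonal projection of `H` onto `W_λ̄` and `i` the inclusion. -/
theorem stmt_6
    {H : Type*} [NormedAddCommGroup H] [InnerProductSpace ℂ H] [CompleteSpace H]
    (D D' Dβ DAt : Submodule ℂ H) (hβD : Dβ ≤ D) (hAtD : DAt ≤ D)
    (A : D →ₗ[ℂ] H) (A' : D' →ₗ[ℂ] H) (μ : ℂ)
    -- μ ∈ ρ(A_β): bounded resolvent Rμ of A_β − μ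
    (Rμ : H →L[ℂ] H)
    (hμran : ∀ f : H, Rμ f ∈ Dβ)
    (hμleft : ∀ u : D, (u : H) ∈ Dβ → Rμ (A u - μ • (u : H)) = (u : H))
    (hμright : ∀ f : H, A ⟨Rμ f, hβD (hμran f)⟩ - μ • Rμ f = f)
    -- μ ∈ ρ(Ã): bounded resolvent RAt of Ã − μ
    (RAt : H →L[ℂ] H)
    (hAran : ∀ f : H, RAt f ∈ DAt)
    (hAranD : ∀ f : H, RAt f ∈ D)
    (hAleft : ∀ u : D, (u : H) ∈ DAt → RAt (A u - μ • (u : H)) = (u : H))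
    (hAright : ∀ f : H, A ⟨RAt f, hAranD f⟩ - μ • RAt f = f)
    -- W_λ̄ : a closed subspace of Z′_λ̄ = ker (A_max′ − λ̄), with orthogonal projection PW
    (W : Submodule ℂ H) (hWclosed : IsClosed (W : Set H))
    (hWZ' : W ≤ (LinearMap.ker (A' - (starRingEnd ℂ μ) • D'.subtype)).map D'.subtype)
    (PW : H →L[ℂ] H)
    (hPWmem : ∀ x : H, PW x ∈ W)
    (hPWfix : ∀ w ∈ W, PW w = w)
    (hPWorth : ∀ x : H, ∀ w ∈ W, ⟪x - PW x, w⟫_ℂ = 0)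
    -- the operator T^λ associated with Ã − λ by the universal parametrization
    (Tμ : H →ₗ.[ℂ] H)
    (hTran : ∀ x : Tμ.domain, Tμ x ∈ W)
    (hTdom : ∀ x : H, x ∈ Tμ.domain ↔
      ∃ u : D, (u : H) ∈ DAt ∧ (u : H) - Rμ (A u - μ • (u : H)) = x)
    (hTval : ∀ (u : D), (u : H) ∈ DAt →
      ∀ hx : ((u : H) - Rμ (A u - μ • (u : H))) ∈ Tμ.domain,
        Tμ ⟨(u : H) - Rμ (A u - μ • (u : H)), hx⟩ = PW (A u - μ • (u : H)))
    (hchar : ∀ u : D, (u : H) ∈ DAt ↔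
      ∃ hx : ((u : H) - Rμ (A u - μ • (u : H))) ∈ Tμ.domain,
        PW (A u - μ • (u : H)) = Tμ ⟨(u : H) - Rμ (A u - μ • (u : H)), hx⟩) :
    -- T^λ is invertible: injective and surjective onto W_λ̄
    (∀ x : Tμ.domain, Tμ x = 0 → (x : H) = 0) ∧
    (∀ w ∈ W, ∃ x : Tμ.domain, Tμ x = w) ∧
    -- Kreĭn resolvent formula: (Ã−λ)⁻¹ f = (A_β−λ)⁻¹ f + (T^λ)⁻¹ (PW f)
    (∀ f : H, ∀ x : Tμ.domain, Tμ x = PW f → RAt f = Rμ f + (x : H)) := by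
  -- key: for any f, RAt f - Rμ f is in the domain of Tμ with value PW f
  have key : ∀ f : H, ∃ hx : (RAt f - Rμ f) ∈ Tμ.domain,
      Tμ ⟨RAt f - Rμ f, hx⟩ = PW f := by
    intro f
    set u : D := ⟨RAt f, hAranD f⟩ with hu_def
    have hu : (u : H) ∈ DAt := hAran f
    have hfu : A u - μ • (u : H) = f := hAright f
    have hx : ((u : H) - Rμ (A u - μ • (u : H))) ∈ Tμ.domain :=
      (hTdom _).mpr ⟨u, hu, rfl⟩
    have hval := hTval u hu hx
    have hcoe : (u : H) - Rμ (A u - μ • (u : H)) = RAt f - Rμ f := by rw [hfu]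
    refine ⟨hcoe ▸ hx, ?_⟩
    have : (⟨RAt f - Rμ f, hcoe ▸ hx⟩ : Tμ.domain)
        = ⟨(u : H) - Rμ (A u - μ • (u : H)), hx⟩ := Subtype.ext hcoe.symm
    rw [this, hval, hfu]
  -- injectivity
  have inj : ∀ x : Tμ.domain, Tμ x = 0 → (x : H) = 0 := by
    intro x hx0
    obtain ⟨u, hu, hxu⟩ := (hTdom x).mp x.2
    have hxmem : ((u : H) - Rμ (A u - μ • (u : H))) ∈ Tμ.domain := hxu ▸ x.2
    have hval := hTval u hu hxmem
    have hxeq : (⟨(u : H) - Rμ (A u - μ • (u : H)), hxmem⟩ : Tμ.domain) = x :=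
      Subtype.ext hxu
    rw [hxeq, hx0] at hval
    -- so PW (A u - μ u) = 0
    set f := A u - μ • (u : H) with hf_def
    have hPWf : PW f = 0 := hval.symm
    -- show Rμ f ∈ DAt via hchar
    set u' : D := ⟨Rμ f, hβD (hμran f)⟩ with hu'_def
    have hfu' : A u' - μ • (u' : H) = f := hμright f
    have h0 : (u' : H) - Rμ (A u' - μ • (u' : H)) = 0 := by
      rw [hfu']; exact sub_self _
    have hmem0 : ((u' : H) - Rμ (A u' - μ • (u' : H))) ∈ Tμ.domain := by
      rw [h0]; exact Tμ.domain.zero_mem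
    have hT0 : Tμ ⟨(u' : H) - Rμ (A u' - μ • (u' : H)), hmem0⟩ = 0 := by
      have : (⟨(u' : H) - Rμ (A u' - μ • (u' : H)), hmem0⟩ : Tμ.domain) = 0 :=
        Subtype.ext h0
      rw [this]; exact Tμ.map_zero
    have hu' : (u' : H) ∈ DAt := (hchar u').mpr ⟨hmem0, by rw [hT0, hfu', hPWf]⟩
    have h1 : RAt f = (u' : H) := by
      have := hAleft u' hu'; rwa [hfu'] at this
    have h2 : RAt f = (u : H) := hAleft u hu
    have : (u : H) = Rμ f := by rw [← h2, h1]
    rw [← hxu, this, sub_self]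
  refine ⟨inj, ?_, ?_⟩
  · -- surjectivity onto W
    intro w hw
    obtain ⟨hx, hval⟩ := key w
    exact ⟨⟨RAt w - Rμ w, hx⟩, by rw [hval, hPWfix w hw]⟩
  · -- Krein formula
    intro f x hTx
    obtain ⟨hy, hvy⟩ := key f
    set y : Tμ.domain := ⟨RAt f - Rμ f, hy⟩ with hy_def
    have hsub : Tμ (y - x) = 0 := by rw [Tμ.map_sub, hvy, hTx, sub_self]
    have := inj (y - x) hsub
    have hyx : (y : H) = (x : H) := by
      have h := this
      rw [Submodule.coe_sub, sub_eq_zero] at h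
      exact h
    have : RAt f - Rμ f = (x : H) := hyx
    rw [← this]; abel
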